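/- arXiv:2310.05379 — 2 statements merged into one kernel-verified Lean document; each statement's English description precedes it below -/
import Mathlib

section
/- Let r : ℝⁿ → ℝⁿ and J : ℝⁿ → ℝ be continuously differentiable, and let a, b ∈ ℝⁿ. Define the mean Jacobian M̄ = ∫₀¹ Dr(b + θ(a − b)) dθ and the mean gradient ḡ = ∫₀¹ ∇J(b + θ(a − b)) dθ. If ψ ∈ ℝⁿ satisfies the mean-value adjoint equation M̄ᵀ ψ = −ḡ, then J(a) − J(b) = −ψ · (r(a) − r(b)). -/
open MeasureTheory
open scoped RealInnerProductSpace

/-- Mean-value adjoint error representation: if `M̄ᵀ ψ = -ḡ` where `M̄` is the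
mean residual Jacobian and `ḡ` the mean QoI gradient along the segment from
`b` to `a`, then `J a - J b = -ψ ⬝ (r a - r b)`. -/
theorem mean_value_adjoint_error (n : ℕ)
    (r : EuclideanSpace ℝ (Fin n) → EuclideanSpace ℝ (Fin n))
    (J : EuclideanSpace ℝ (Fin n) → ℝ)
    (hr : ContDiff ℝ 1 r) (hJ : ContDiff ℝ 1 J)
    (a b ψ : EuclideanSpace ℝ (Fin n))
    (hψ : ContinuousLinearMap.adjoint
        (∫ θ in (0:ℝ)..1, fderiv ℝ r (b + θ • (a - b))) ψ
      = -(∫ θ in (0:ℝ)..1, gradient J (b + θ • (a - b)))) :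
    J a - J b = -⟪ψ, r a - r b⟫ := by
  set v := a - b with hv
  set x : ℝ → EuclideanSpace ℝ (Fin n) := fun θ => b + θ • v with hxdef
  have hxC : Continuous x := by continuity
  have hx : ∀ θ : ℝ, HasDerivAt x v θ := fun θ => by
    simpa [hxdef] using ((hasDerivAt_id θ).smul_const v).const_add b
  -- continuity of the integrands
  have hrf : Continuous fun y => fderiv ℝ r y := hr.continuous_fderiv one_ne_zero
  have hJf : Continuous fun y => fderiv ℝ J y := hJ.continuous_fderiv one_ne_zero
  have hMc : Continuous fun θ => fderiv ℝ r (x θ) := hrf.comp hxC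
  have hMint : IntervalIntegrable (fun θ => fderiv ℝ r (x θ)) volume 0 1 :=
    hMc.intervalIntegrable 0 1
  have hgc : Continuous fun θ => gradient J (x θ) := by
    have : (fun θ => gradient J (x θ))
        = fun θ => (InnerProductSpace.toDual ℝ _).symm (fderiv ℝ J (x θ)) := rfl
    rw [this]
    exact (InnerProductSpace.toDual ℝ _).symm.continuous.comp (hJf.comp hxC)
  have hgint : IntervalIntegrable (fun θ => gradient J (x θ)) volume 0 1 :=
    hgc.intervalIntegrable 0 1
  -- FTC for r along the segment
  have hra : r a - r b = ∫ θ in (0:ℝ)..1, fderiv ℝ r (x θ) v := by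
    have h1 : ∀ θ ∈ Set.uIcc (0:ℝ) 1,
        HasDerivAt (fun θ => r (x θ)) (fderiv ℝ r (x θ) v) θ := fun θ _ =>
      ((hr.differentiable one_ne_zero (x θ)).hasFDerivAt).comp_hasDerivAt θ (hx θ)
    have h2 : IntervalIntegrable (fun θ => fderiv ℝ r (x θ) v) volume 0 1 :=
      ((ContinuousLinearMap.apply ℝ _ v).continuous.comp hMc).intervalIntegrable 0 1
    have := intervalIntegral.integral_eq_sub_of_hasDerivAt h1 h2
    rw [this]
    simp [hxdef, hv]
  -- FTC for J along the segment, written via the gradient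
  have hJa : J a - J b = ∫ θ in (0:ℝ)..1, ⟪gradient J (x θ), v⟫ := by
    have h1 : ∀ θ ∈ Set.uIcc (0:ℝ) 1,
        HasDerivAt (fun θ => J (x θ)) (⟪gradient J (x θ), v⟫) θ := by
      intro θ _
      have hg : HasGradientAt J (gradient J (x θ)) (x θ) :=
        (hJ.differentiable one_ne_zero (x θ)).hasGradientAt
      exact hg.hasFDerivAt.comp_hasDerivAt θ (hx θ)
    have h2 : IntervalIntegrable (fun θ => ⟪gradient J (x θ), v⟫) volume 0 1 :=
      (continuous_inner.comp (hgc.prodMk continuous_const)).intervalIntegrable 0 1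
    have := intervalIntegral.integral_eq_sub_of_hasDerivAt h1 h2
    rw [this]
    simp [hxdef, hv]
  -- pull the inner product / application out of the integrals
  have hMap : (∫ θ in (0:ℝ)..1, fderiv ℝ r (x θ)) v
      = ∫ θ in (0:ℝ)..1, fderiv ℝ r (x θ) v :=
    ContinuousLinearMap.intervalIntegral_apply hMint v
  have hginner : ⟪(∫ θ in (0:ℝ)..1, gradient J (x θ)), v⟫
      = ∫ θ in (0:ℝ)..1, ⟪gradient J (x θ), v⟫ := by
    rw [intervalIntegral.integral_of_le zero_le_one,
      intervalIntegral.integral_of_le zero_le_one]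
    calc ⟪∫ θ in Set.Ioc (0:ℝ) 1, gradient J (x θ), v⟫
        = ⟪v, ∫ θ in Set.Ioc (0:ℝ) 1, gradient J (x θ)⟫ := real_inner_comm _ _
      _ = ∫ θ in Set.Ioc (0:ℝ) 1, ⟪v, gradient J (x θ)⟫ := by
          exact (integral_inner (𝕜 := ℝ) hgint.1 v).symm
      _ = ∫ θ in Set.Ioc (0:ℝ) 1, ⟪gradient J (x θ), v⟫ := by
          simp [mul_comm]
  -- combine
  have key : ⟪ψ, r a - r b⟫ = -(J a - J b) := by
    rw [hra, ← hMap, ← ContinuousLinearMap.adjoint_inner_left, hψ, inner_neg_left,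
      hginner, ← hJa]
  rw [key]; ring
end

section
/- Let r : ℝⁿ → ℝⁿ and J : ℝⁿ → ℝ be continuously differentiable. Let b ∈ ℝⁿ satisfy r(b) = 0 (the fine-space solution) and let a ∈ ℝⁿ be arbitrary (the prolonged coarse-space solution). Define M̄ = ∫₀¹ Dr(b + θ(a − b)) dθ and ḡ = ∫₀¹ ∇J(b + θ(a − b)) dθ, and suppose ψ ∈ ℝⁿ satisfies M̄ᵀ ψ = −ḡ. Then the quantity-of-interest error admits the exact adjoint-weighted residual representation J(a) − J(b) = −ψ · r(a). -/
open MeasureTheory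
open scoped RealInnerProductSpace

/-- Mean-value dual-weighted residual formula: if `b` is a fine-space solution
(`r b = 0`) and `ψ` solves the mean-value adjoint equation `M̄ᵀ ψ = -ḡ`, then
the quantity-of-interest error admits the exact adjoint-weighted residual
representation `J a - J b = -ψ ⬝ r a`. -/
theorem dwr_mean_value_exact (n : ℕ)
    (r : EuclideanSpace ℝ (Fin n) → EuclideanSpace ℝ (Fin n))
    (J : EuclideanSpace ℝ (Fin n) → ℝ)
    (hr : ContDiff ℝ 1 r) (hJ : ContDiff ℝ 1 J)
    (a b ψ : EuclideanSpace ℝ (Fin n))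
    (hb : r b = 0)
    (hψ : ContinuousLinearMap.adjoint
        (∫ θ in (0:ℝ)..1, fderiv ℝ r (b + θ • (a - b))) ψ
      = -(∫ θ in (0:ℝ)..1, gradient J (b + θ • (a - b)))) :
    J a - J b = -⟪ψ, r a⟫ := by
  set v := a - b with hv
  set γ : ℝ → EuclideanSpace ℝ (Fin n) := fun θ => b + θ • v with hγ
  have hγc : Continuous γ := by continuity
  have hγderiv : ∀ θ : ℝ, HasDerivAt γ v θ := fun θ => by
    simpa [hγ] using ((hasDerivAt_id θ).smul_const v).const_add b
  have hγ1 : γ 1 = a := by simp [hγ, hv]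
  have hγ0 : γ 0 = b := by simp [hγ]
  -- continuity of derivatives
  have hfr : Continuous fun θ => fderiv ℝ r (γ θ) :=
    (hr.continuous_fderiv one_ne_zero).comp hγc
  have hfJ : Continuous fun θ => fderiv ℝ J (γ θ) :=
    (hJ.continuous_fderiv one_ne_zero).comp hγc
  have hgJ : Continuous fun θ => gradient J (γ θ) := by
    have : Continuous fun θ =>
        (InnerProductSpace.toDual ℝ (EuclideanSpace ℝ (Fin n))).symm (fderiv ℝ J (γ θ)) :=
      (InnerProductSpace.toDual ℝ _).symm.continuous.comp hfJ
    simpa [gradient] using this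
  -- FTC for r along the segment
  have hrInt : IntervalIntegrable (fun θ => fderiv ℝ r (γ θ) v) volume 0 1 :=
    (hfr.clm_apply continuous_const).intervalIntegrable 0 1
  have hra : r a = ∫ θ in (0:ℝ)..1, fderiv ℝ r (γ θ) v := by
    have := intervalIntegral.integral_eq_sub_of_hasDerivAt
      (f := fun θ => r (γ θ)) (f' := fun θ => fderiv ℝ r (γ θ) v)
      (fun θ _ => ((hr.differentiable one_ne_zero (γ θ)).hasFDerivAt).comp_hasDerivAt θ
        (hγderiv θ)) hrInt
    rw [this]; simp only [hγ1, hγ0, hb, sub_zero]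
  -- FTC for J along the segment
  have hJInt : IntervalIntegrable (fun θ => fderiv ℝ J (γ θ) v) volume 0 1 :=
    (hfJ.clm_apply continuous_const).intervalIntegrable 0 1
  have hJa : J a - J b = ∫ θ in (0:ℝ)..1, fderiv ℝ J (γ θ) v := by
    have := intervalIntegral.integral_eq_sub_of_hasDerivAt
      (f := fun θ => J (γ θ)) (f' := fun θ => fderiv ℝ J (γ θ) v)
      (fun θ _ => ((hJ.differentiable one_ne_zero (γ θ)).hasFDerivAt).comp_hasDerivAt θ
        (hγderiv θ)) hJInt
    rw [this]; simp only [hγ1, hγ0]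
  -- gradient inner product identity
  have hgrad : ∀ θ : ℝ, fderiv ℝ J (γ θ) v = ⟪gradient J (γ θ), v⟫ := by
    intro θ
    simp [gradient, InnerProductSpace.toDual_symm_apply]
  -- pull the integral out of the inner product / linear map application
  have hMint : IntervalIntegrable (fun θ => fderiv ℝ r (γ θ)) volume 0 1 :=
    hfr.intervalIntegrable 0 1
  have hMa : r a = (∫ θ in (0:ℝ)..1, fderiv ℝ r (γ θ)) v := by
    rw [ContinuousLinearMap.intervalIntegral_apply hMint v, hra]
  have hgInt : IntervalIntegrable (fun θ => gradient J (γ θ)) volume 0 1 :=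
    hgJ.intervalIntegrable 0 1
  have hgbar : ⟪(∫ θ in (0:ℝ)..1, gradient J (γ θ)), v⟫
      = ∫ θ in (0:ℝ)..1, ⟪gradient J (γ θ), v⟫ := by
    have := ContinuousLinearMap.intervalIntegral_comp_comm
      (innerSL ℝ (E := EuclideanSpace ℝ (Fin n)) v) hgInt
    simp only [innerSL_apply_apply] at this
    rw [real_inner_comm, ← this]
    simp_rw [real_inner_comm]
  -- conclude
  have key : ⟪ψ, r a⟫ = -(J a - J b) := by
    rw [hMa, ← ContinuousLinearMap.adjoint_inner_left, hψ, inner_neg_left, hgbar, hJa]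
    simp_rw [hgrad]
  linarith [key]
end
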